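/- Let m ≥ 1, δ₀ > -m, and for 1 ≤ r ≤ t define ξ_r^t = ∏_{j=r+1}^t ∏_{i=1}^m (1 + 2/S_{j,i-1}(δ₀)), where S_{j,i-1}(δ₀) = (2m+δ₀)j - 2m + i - 1. Then there exists a constant B > 0 depending only on m and δ₀ such that for all 1 ≤ u < t: ξ_u^t ≤ B·(t/u)^{2m/(2m+δ₀)}. -/

import Mathlib

open Finset Real

/-- `S_{j,i-1}(δ) = (2m+δ)j - 2m + i - 1`, here with `jj = i - 1`. -/
noncomputable def Spa (m j jj : ℕ) (δ : ℝ) : ℝ :=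
  (2 * m + δ) * j - 2 * m + jj

/-- Telescoping sum over `Icc (u+1) t`. -/
lemma tele_sum (f : ℕ → ℝ) (u : ℕ) : ∀ t : ℕ, u ≤ t →
    ∑ j ∈ Finset.Icc (u + 1) t, (f j - f (j - 1)) = f t - f u := by
  intro t ht
  induction t, ht using Nat.le_induction with
  | base => simp
  | succ n hn ih =>
      rw [Finset.sum_Icc_succ_top (by omega : u + 1 ≤ n + 1), ih]
      simp

set_option maxHeartbeats 1600000 in
theorem xi_bound (m : ℕ) (hm : 1 ≤ m) (δ₀ : ℝ) (hδ₀ : -(m : ℝ) < δ₀) :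
    ∃ B : ℝ, 0 < B ∧ ∀ u t : ℕ, 1 ≤ u → u < t →
      (∏ j ∈ Finset.Icc (u + 1) t, ∏ i ∈ Finset.Icc 1 m,
          (1 + 2 / Spa m j (i - 1) δ₀)) ≤
        B * ((t : ℝ) / u) ^ ((2 * m : ℝ) / (2 * m + δ₀)) := by
  have hm1 : (1 : ℝ) ≤ m := by exact_mod_cast hm
  set c : ℝ := 2 * m + δ₀ with hcdef
  have hcm : (m : ℝ) < c := by rw [hcdef]; linarith
  have hc0 : 0 < c := by linarith
  set a : ℝ := 2 * m / c with hadef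
  have ha0 : 0 < a := div_pos (by linarith) hc0
  have hac : a * c = 2 * m := by rw [hadef]; field_simp
  have ha2 : a < 2 := by rw [hadef, div_lt_iff₀ hc0]; linarith
  set K : ℝ := 2 * a ^ 2 / (2 - a) with hKdef
  have hK0 : 0 ≤ K := div_nonneg (by positivity) (by linarith)
  refine ⟨Real.exp K, Real.exp_pos _, fun u t hu hut => ?_⟩
  have hu1 : (1 : ℝ) ≤ u := by exact_mod_cast hu
  have hut' : (u : ℝ) < t := by exact_mod_cast hut
  have ht0 : (0 : ℝ) < t := by linarith
  -- pointwise facts for j in the range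
  have hj2 : ∀ j ∈ Finset.Icc (u + 1) t, (2 : ℝ) ≤ j := by
    intro j hj
    rw [Finset.mem_Icc] at hj
    have : 2 ≤ j := by omega
    exact_mod_cast this
  have hden : ∀ j ∈ Finset.Icc (u + 1) t, 0 < c * j - 2 * m := by
    intro j hj
    have h2 : (2 : ℝ) ≤ j := hj2 j hj
    nlinarith
  have hSpa : ∀ j ∈ Finset.Icc (u + 1) t, ∀ i ∈ Finset.Icc 1 m,
      c * j - 2 * m ≤ Spa m j (i - 1) δ₀ := by
    intro j hj i hi
    have : (0 : ℝ) ≤ ((i - 1 : ℕ) : ℝ) := Nat.cast_nonneg _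
    simp only [Spa, ← hcdef]
    linarith
  have hSpa0 : ∀ j ∈ Finset.Icc (u + 1) t, ∀ i ∈ Finset.Icc 1 m,
      0 < Spa m j (i - 1) δ₀ := fun j hj i hi =>
    lt_of_lt_of_le (hden j hj) (hSpa j hj i hi)
  -- Step 1: product ≤ exp of sum
  have step1 : (∏ j ∈ Finset.Icc (u + 1) t, ∏ i ∈ Finset.Icc 1 m,
      (1 + 2 / Spa m j (i - 1) δ₀)) ≤
      Real.exp (∑ j ∈ Finset.Icc (u + 1) t, ∑ i ∈ Finset.Icc 1 m,
        2 / Spa m j (i - 1) δ₀) := by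
    rw [Real.exp_sum]
    refine Finset.prod_le_prod ?_ ?_
    · intro j hj
      refine Finset.prod_nonneg fun i hi => ?_
      have := hSpa0 j hj i hi
      positivity
    · intro j hj
      rw [Real.exp_sum]
      refine Finset.prod_le_prod ?_ ?_
      · intro i hi
        have := hSpa0 j hj i hi
        positivity
      · intro i hi
        have h := Real.add_one_le_exp (2 / Spa m j (i - 1) δ₀)
        linarith
  -- Step 2: inner sum bound
  have step2 : ∀ j ∈ Finset.Icc (u + 1) t,
      ∑ i ∈ Finset.Icc 1 m, 2 / Spa m j (i - 1) δ₀ ≤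
        a / (j : ℝ) + K / (((j : ℝ) - 1) * j) := by
    intro j hj
    have h2 : (2 : ℝ) ≤ j := hj2 j hj
    have hd : 0 < c * j - 2 * m := hden j hj
    have hja : a < (j : ℝ) := lt_of_lt_of_le ha2 h2
    have hja0 : 0 < (j : ℝ) - a := by linarith
    have hj0 : (0 : ℝ) < j := by linarith
    have hj1 : (0 : ℝ) < (j : ℝ) - 1 := by linarith
    have hsum : ∑ i ∈ Finset.Icc 1 m, 2 / Spa m j (i - 1) δ₀ ≤
        (m : ℝ) * (2 / (c * j - 2 * m)) := by
      calc ∑ i ∈ Finset.Icc 1 m, 2 / Spa m j (i - 1) δ₀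
          ≤ ∑ _i ∈ Finset.Icc 1 m, 2 / (c * j - 2 * m) := by
            refine Finset.sum_le_sum fun i hi => ?_
            exact div_le_div_of_nonneg_left (by norm_num) hd (hSpa j hj i hi)
        _ = (m : ℝ) * (2 / (c * j - 2 * m)) := by
            rw [Finset.sum_const, Nat.card_Icc]
            simp [nsmul_eq_mul]
    have hca : c * ((j : ℝ) - a) = c * j - 2 * m := by
      have h : c * a = 2 * m := by linarith [hac]
      nlinarith [h]
    have heq : (m : ℝ) * (2 / (c * j - 2 * m)) = a / ((j : ℝ) - a) := by
      rw [hadef, div_div, hca]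
      ring
    have hfinal : a / ((j : ℝ) - a) ≤ a / (j : ℝ) + K / (((j : ℝ) - 1) * j) := by
      have hjne : (j : ℝ) ≠ 0 := ne_of_gt hj0
      have hjane : (j : ℝ) - a ≠ 0 := ne_of_gt hja0
      have h1 : a / ((j : ℝ) - a) - a / j = a ^ 2 / ((j : ℝ) * ((j : ℝ) - a)) := by
        field_simp
        ring
      have key : a ^ 2 * (((j : ℝ) - 1) * j) * (2 - a) ≤
          (2 * a ^ 2) * ((j : ℝ) * ((j : ℝ) - a)) := by
        nlinarith [mul_nonneg (mul_nonneg (sq_nonneg a) hj0.le)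
            (mul_nonneg ha0.le (by linarith : (0 : ℝ) ≤ (j : ℝ) - 2)),
          mul_nonneg (mul_nonneg (sq_nonneg a) hj0.le) (by linarith : (0 : ℝ) ≤ 2 - a)]
      have h2 : a ^ 2 / ((j : ℝ) * ((j : ℝ) - a)) ≤ K / (((j : ℝ) - 1) * j) := by
        rw [div_le_div_iff₀ (mul_pos hj0 hja0) (mul_pos hj1 hj0), hKdef,
          div_mul_eq_mul_div, le_div_iff₀ (by linarith : (0 : ℝ) < 2 - a)]
        linarith [key]
      linarith [h1, h2]
    calc ∑ i ∈ Finset.Icc 1 m, 2 / Spa m j (i - 1) δ₀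
        ≤ (m : ℝ) * (2 / (c * j - 2 * m)) := hsum
      _ = a / ((j : ℝ) - a) := heq
      _ ≤ a / (j : ℝ) + K / (((j : ℝ) - 1) * j) := hfinal
  -- Step 3: sum over j
  have hlog : ∑ j ∈ Finset.Icc (u + 1) t, (1 : ℝ) / j ≤
      Real.log t - Real.log u := by
    have htel := tele_sum (fun n => Real.log n) u t (le_of_lt hut)
    calc ∑ j ∈ Finset.Icc (u + 1) t, (1 : ℝ) / j
        ≤ ∑ j ∈ Finset.Icc (u + 1) t,
            (Real.log j - Real.log ((j - 1 : ℕ) : ℝ)) := by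
          refine Finset.sum_le_sum fun j hj => ?_
          have h2 : (2 : ℝ) ≤ j := hj2 j hj
          have hj0 : (0 : ℝ) < j := by linarith
          have hjnat : 2 ≤ j := by exact_mod_cast h2
          have hcast : ((j - 1 : ℕ) : ℝ) = (j : ℝ) - 1 := by
            rw [Nat.cast_sub (by omega)]; simp
          rw [hcast]
          have hx : (0 : ℝ) < ((j : ℝ) - 1) / j :=
            div_pos (by linarith) hj0
          have hl := Real.log_le_sub_one_of_pos hx
          rw [Real.log_div (by linarith) (ne_of_gt hj0)] at hl
          have : ((j : ℝ) - 1) / j - 1 = -(1 / j) := by field_simp; ring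
          rw [this] at hl
          linarith
      _ = Real.log t - Real.log u := htel
  have hrec : ∑ j ∈ Finset.Icc (u + 1) t, (1 : ℝ) / (((j : ℝ) - 1) * j) ≤ 1 := by
    have htel := tele_sum (fun n : ℕ => -(1 / (n : ℝ))) u t (le_of_lt hut)
    have heq : ∀ j ∈ Finset.Icc (u + 1) t, (1 : ℝ) / (((j : ℝ) - 1) * j) =
        (fun n : ℕ => -(1 / (n : ℝ))) j - (fun n : ℕ => -(1 / (n : ℝ))) (j - 1) := by
      intro j hj
      have h2 : (2 : ℝ) ≤ j := hj2 j hj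
      have hjnat : 2 ≤ j := by exact_mod_cast h2
      have hcast : ((j - 1 : ℕ) : ℝ) = (j : ℝ) - 1 := by
        rw [Nat.cast_sub (by omega)]; simp
      simp only [hcast]
      have hj0 : (0 : ℝ) < j := by linarith
      have hj1 : (0 : ℝ) < (j : ℝ) - 1 := by linarith
      field_simp
      ring
    rw [Finset.sum_congr rfl heq, htel]
    have h1u : 1 / (u : ℝ) ≤ 1 := by
      rw [div_le_one (by linarith)]; linarith
    have h1t : 0 ≤ 1 / (t : ℝ) := by positivity
    linarith
  have step3 : ∑ j ∈ Finset.Icc (u + 1) t, ∑ i ∈ Finset.Icc 1 m,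
      2 / Spa m j (i - 1) δ₀ ≤ a * (Real.log t - Real.log u) + K := by
    calc ∑ j ∈ Finset.Icc (u + 1) t, ∑ i ∈ Finset.Icc 1 m, 2 / Spa m j (i - 1) δ₀
        ≤ ∑ j ∈ Finset.Icc (u + 1) t, (a / (j : ℝ) + K / (((j : ℝ) - 1) * j)) :=
          Finset.sum_le_sum step2
      _ = a * ∑ j ∈ Finset.Icc (u + 1) t, (1 : ℝ) / j +
            K * ∑ j ∈ Finset.Icc (u + 1) t, (1 : ℝ) / (((j : ℝ) - 1) * j) := by
          rw [Finset.sum_add_distrib, Finset.mul_sum, Finset.mul_sum]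
          congr 1 <;> refine Finset.sum_congr rfl fun j hj => ?_ <;> ring
      _ ≤ a * (Real.log t - Real.log u) + K * 1 := by
          gcongr
      _ = a * (Real.log t - Real.log u) + K := by ring
  -- Conclusion
  have hrpow : ((t : ℝ) / u) ^ ((2 * m : ℝ) / (2 * m + δ₀)) =
      Real.exp (a * (Real.log t - Real.log u)) := by
    have hdiv : (0 : ℝ) < (t : ℝ) / u := by positivity
    rw [Real.rpow_def_of_pos hdiv, Real.log_div (ne_of_gt ht0) (by linarith)]
    congr 1
    rw [hadef, hcdef]
    push_cast
    ring
  calc (∏ j ∈ Finset.Icc (u + 1) t, ∏ i ∈ Finset.Icc 1 m,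
        (1 + 2 / Spa m j (i - 1) δ₀))
      ≤ Real.exp (∑ j ∈ Finset.Icc (u + 1) t, ∑ i ∈ Finset.Icc 1 m,
          2 / Spa m j (i - 1) δ₀) := step1
    _ ≤ Real.exp (a * (Real.log t - Real.log u) + K) := Real.exp_le_exp.mpr step3
    _ = Real.exp K * ((t : ℝ) / u) ^ ((2 * m : ℝ) / (2 * m + δ₀)) := by
        rw [hrpow, ← Real.exp_add]; ring_nf
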